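/- Fix y ∈ Δ^m (the probability simplex), a matrix M ∈ R^{m×n}, and b ∈ R^n. Define a random vector g̃ by: sample (i,j) with probability p_{ij} = y_i·|M_{ij}|/Σ_{j'}|M_{ij'}| and independently j' with probability |b_{j'}|/‖b‖_1, and set g̃ = (M_{ij} y_i / p_{ij}) e_j + (b_{j'}/p_{j'}) e_{j'}. Then E[g̃] = Mᵀy + b and E[‖g̃‖_2²] ≤ 2(‖b‖_1² + ‖M‖_∞²), where ‖M‖_∞ := max_i Σ_j |M_{ij}|. -/

import Mathlib

open Finset

/-- The x-side gradient estimator for the ℓ∞-ℓ₁ game: it is unbiased for `Mᵀy + b`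
and has second moment at most `2(‖b‖₁² + ‖M‖∞²)`. -/
theorem stmt6 {m n : ℕ} [NeZero m] [NeZero n]
    (M : Matrix (Fin m) (Fin n) ℝ) (b : Fin n → ℝ)
    (y : Fin m → ℝ) (hynn : ∀ i, 0 ≤ y i) (hysum : ∑ i, y i = 1)
    (hrows : ∀ i, ∃ j, M i j ≠ 0) (hb : b ≠ 0)
    (pM : Fin m × Fin n → ℝ) (hpM : ∀ ij, pM ij = y ij.1 * |M ij.1 ij.2| / ∑ j', |M ij.1 j'|)
    (pb : Fin n → ℝ) (hpb : ∀ j', pb j' = |b j'| / ∑ j, |b j|)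
    (g : (Fin m × Fin n) × Fin n → Fin n → ℝ)
    (hg : ∀ ω k, g ω k =
      (if k = ω.1.2 then M ω.1.1 ω.1.2 * y ω.1.1 / pM ω.1 else 0) +
      (if k = ω.2 then b ω.2 / pb ω.2 else 0)) :
    (∀ k, ∑ ω : (Fin m × Fin n) × Fin n, (pM ω.1 * pb ω.2) * g ω k
        = (∑ i, M i k * y i) + b k) ∧
    (∑ ω : (Fin m × Fin n) × Fin n, (pM ω.1 * pb ω.2) * (∑ k, (g ω k) ^ 2)
        ≤ 2 * ((∑ j, |b j|) ^ 2 +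
          (Finset.univ.sup' Finset.univ_nonempty (fun i => ∑ j, |M i j|)) ^ 2)) := by
  have hS : ∀ i, 0 < ∑ j, |M i j| := by
    intro i
    obtain ⟨j, hj⟩ := hrows i
    exact Finset.sum_pos' (fun j _ => abs_nonneg _) ⟨j, Finset.mem_univ j, abs_pos.2 hj⟩
  have hT : 0 < ∑ j, |b j| := by
    obtain ⟨j, hj⟩ : ∃ j, b j ≠ 0 := by
      by_contra h; push_neg at h; exact hb (funext h)
    exact Finset.sum_pos' (fun j _ => abs_nonneg _) ⟨j, Finset.mem_univ j, abs_pos.2 hj⟩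
  have hpMnn : ∀ ij, 0 ≤ pM ij := by
    intro ij; rw [hpM]
    exact div_nonneg (mul_nonneg (hynn _) (abs_nonneg _)) (hS _).le
  have hpbnn : ∀ j, 0 ≤ pb j := by
    intro j; rw [hpb]; exact div_nonneg (abs_nonneg _) hT.le
  have hpMrow : ∀ i, ∑ j, pM (i, j) = y i := by
    intro i
    simp only [hpM]
    rw [← Finset.sum_div, ← Finset.mul_sum, mul_div_assoc, div_self (hS i).ne', mul_one]
  have hpMsum : ∑ ij : Fin m × Fin n, pM ij = 1 := by
    rw [Fintype.sum_prod_type]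
    simp only [hpMrow, hysum]
  have hpbsum : ∑ j, pb j = 1 := by
    simp only [hpb]
    rw [← Finset.sum_div, div_self hT.ne']
  -- cancellation lemmas
  have key1 : ∀ ij : Fin m × Fin n, pM ij * (M ij.1 ij.2 * y ij.1 / pM ij)
      = M ij.1 ij.2 * y ij.1 := by
    intro ij
    rcases eq_or_ne (pM ij) 0 with h | h
    · rw [h, zero_mul]
      symm
      have h2 : y ij.1 * |M ij.1 ij.2| = 0 := by
        have := (hpM ij).symm.trans h
        rwa [div_eq_zero_iff, or_iff_left (hS ij.1).ne'] at this
      rcases mul_eq_zero.1 h2 with h3 | h3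
      · rw [h3, mul_zero]
      · rw [abs_eq_zero] at h3; rw [h3, zero_mul]
    · field_simp
  have key2 : ∀ j, pb j * (b j / pb j) = b j := by
    intro j
    rcases eq_or_ne (pb j) 0 with h | h
    · rw [h, zero_mul]
      symm
      have h2 : |b j| = 0 := by
        have := (hpb j).symm.trans h
        rwa [div_eq_zero_iff, or_iff_left hT.ne'] at this
      exact abs_eq_zero.1 h2
    · field_simp
  have key3 : ∀ ij : Fin m × Fin n, pM ij * (M ij.1 ij.2 * y ij.1 / pM ij) ^ 2
      = y ij.1 * |M ij.1 ij.2| * (∑ j', |M ij.1 j'|) := by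
    intro ij
    rcases eq_or_ne (y ij.1 * |M ij.1 ij.2|) 0 with h0 | h0
    · have hp0 : pM ij = 0 := by rw [hpM, h0, zero_div]
      rw [hp0, zero_mul, h0, zero_mul]
    · have hp0 : pM ij ≠ 0 := by
        rw [hpM]; exact div_ne_zero h0 (hS ij.1).ne'
      have l1 : pM ij * (M ij.1 ij.2 * y ij.1 / pM ij) ^ 2
          = (M ij.1 ij.2 * y ij.1) ^ 2 / pM ij := by
        field_simp
      rw [l1, hpM, div_div_eq_mul_div, div_eq_iff h0, mul_pow, ← sq_abs (M ij.1 ij.2)]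
      ring
  have key4 : ∀ j, pb j * (b j / pb j) ^ 2 = |b j| * (∑ j', |b j'|) := by
    intro j
    rcases eq_or_ne (b j) 0 with h0 | h0
    · have hp0 : pb j = 0 := by rw [hpb, h0, abs_zero, zero_div]
      rw [hp0, zero_mul, h0, abs_zero, zero_mul]
    · have ha0 : |b j| ≠ 0 := abs_ne_zero.2 h0
      have hp0 : pb j ≠ 0 := by
        rw [hpb]; exact div_ne_zero ha0 hT.ne'
      have l1 : pb j * (b j / pb j) ^ 2 = (b j) ^ 2 / pb j := by
        field_simp
      rw [l1, hpb, div_div_eq_mul_div, div_eq_iff ha0, ← sq_abs (b j)]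
      ring
  constructor
  · intro k
    have expand : ∀ ω : (Fin m × Fin n) × Fin n, (pM ω.1 * pb ω.2) * g ω k
        = pb ω.2 * (if k = ω.1.2 then M ω.1.1 k * y ω.1.1 else 0)
          + pM ω.1 * (if k = ω.2 then b ω.2 else 0) := by
      intro ω
      rw [hg, mul_add]
      congr 1
      · rcases eq_or_ne k ω.1.2 with h | h
        · subst h
          rw [if_pos rfl, if_pos rfl]
          rw [show (pM ω.1 * pb ω.2) * (M ω.1.1 ω.1.2 * y ω.1.1 / pM ω.1)
              = pb ω.2 * (pM ω.1 * (M ω.1.1 ω.1.2 * y ω.1.1 / pM ω.1)) from by ring, key1 ω.1]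
        · simp [h]
      · rcases eq_or_ne k ω.2 with h | h
        · subst h
          rw [if_pos rfl, if_pos rfl]
          rw [show (pM ω.1 * pb ω.2) * (b ω.2 / pb ω.2)
              = pM ω.1 * (pb ω.2 * (b ω.2 / pb ω.2)) from by ring, key2 ω.2]
        · simp [h]
    rw [Finset.sum_congr rfl (fun ω _ => expand ω), Finset.sum_add_distrib]
    congr 1
    · rw [Fintype.sum_prod_type]
      have step : ∀ p : Fin m × Fin n,
          ∑ j' : Fin n, pb j' * (if k = p.2 then M p.1 k * y p.1 else 0)
          = (if k = p.2 then M p.1 k * y p.1 else 0) := by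
        intro p
        rw [← Finset.sum_mul, hpbsum, one_mul]
      calc ∑ p : Fin m × Fin n, ∑ j' : Fin n,
              pb j' * (if k = p.2 then M p.1 k * y p.1 else 0)
          = ∑ p : Fin m × Fin n, (if k = p.2 then M p.1 k * y p.1 else 0) :=
            Finset.sum_congr rfl (fun p _ => step p)
        _ = ∑ i, M i k * y i := by
            rw [Fintype.sum_prod_type]
            exact Finset.sum_congr rfl (fun i _ => by simp)
    · rw [Fintype.sum_prod_type]
      have step : ∀ p : Fin m × Fin n,
          ∑ j' : Fin n, pM p * (if k = j' then b j' else 0) = pM p * b k := by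
        intro p
        rw [← Finset.mul_sum]
        congr 1
        simp
      calc ∑ p : Fin m × Fin n, ∑ j' : Fin n, pM p * (if k = j' then b j' else 0)
          = ∑ p : Fin m × Fin n, pM p * b k :=
            Finset.sum_congr rfl (fun p _ => step p)
        _ = b k := by rw [← Finset.sum_mul, hpMsum, one_mul]
  · set N := Finset.univ.sup' Finset.univ_nonempty (fun i => ∑ j, |M i j|) with hN
    have hSN : ∀ i, (∑ j, |M i j|) ≤ N :=
      fun i => Finset.le_sup' (fun i => ∑ j, |M i j|) (Finset.mem_univ i)
    have hNpos : 0 < N := (hS (Classical.arbitrary _)).trans_le (hSN _)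
    have pointwise : ∀ ω : (Fin m × Fin n) × Fin n,
        (pM ω.1 * pb ω.2) * (∑ k, (g ω k) ^ 2)
        ≤ 2 * (pb ω.2 * (pM ω.1 * (M ω.1.1 ω.1.2 * y ω.1.1 / pM ω.1) ^ 2))
          + 2 * (pM ω.1 * (pb ω.2 * (b ω.2 / pb ω.2) ^ 2)) := by
      intro ω
      have hsq : (∑ k, (g ω k) ^ 2)
          ≤ 2 * (M ω.1.1 ω.1.2 * y ω.1.1 / pM ω.1) ^ 2 + 2 * (b ω.2 / pb ω.2) ^ 2 := by
        have hterm : ∀ k, (g ω k) ^ 2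
            ≤ 2 * (if k = ω.1.2 then M ω.1.1 ω.1.2 * y ω.1.1 / pM ω.1 else 0) ^ 2
              + 2 * (if k = ω.2 then b ω.2 / pb ω.2 else 0) ^ 2 := by
          intro k
          rw [hg]
          nlinarith [sq_nonneg ((if k = ω.1.2 then M ω.1.1 ω.1.2 * y ω.1.1 / pM ω.1 else 0)
            - (if k = ω.2 then b ω.2 / pb ω.2 else 0))]
        calc (∑ k, (g ω k) ^ 2)
            ≤ ∑ k, (2 * (if k = ω.1.2 then M ω.1.1 ω.1.2 * y ω.1.1 / pM ω.1 else 0) ^ 2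
              + 2 * (if k = ω.2 then b ω.2 / pb ω.2 else 0) ^ 2) :=
              Finset.sum_le_sum (fun k _ => hterm k)
          _ = 2 * (M ω.1.1 ω.1.2 * y ω.1.1 / pM ω.1) ^ 2 + 2 * (b ω.2 / pb ω.2) ^ 2 := by
              rw [Finset.sum_add_distrib]
              congr 1
              · rw [← Finset.mul_sum]
                congr 1
                simp [apply_ite (· ^ 2)]
              · rw [← Finset.mul_sum]
                congr 1
                simp [apply_ite (· ^ 2)]
      calc (pM ω.1 * pb ω.2) * (∑ k, (g ω k) ^ 2)
          ≤ (pM ω.1 * pb ω.2) * (2 * (M ω.1.1 ω.1.2 * y ω.1.1 / pM ω.1) ^ 2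
              + 2 * (b ω.2 / pb ω.2) ^ 2) :=
            mul_le_mul_of_nonneg_left hsq (mul_nonneg (hpMnn _) (hpbnn _))
        _ = 2 * (pb ω.2 * (pM ω.1 * (M ω.1.1 ω.1.2 * y ω.1.1 / pM ω.1) ^ 2))
            + 2 * (pM ω.1 * (pb ω.2 * (b ω.2 / pb ω.2) ^ 2)) := by ring
    have sumX : ∑ p : Fin m × Fin n, pM p * (M p.1 p.2 * y p.1 / pM p) ^ 2 ≤ N ^ 2 := by
      calc ∑ p : Fin m × Fin n, pM p * (M p.1 p.2 * y p.1 / pM p) ^ 2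
          = ∑ p : Fin m × Fin n, y p.1 * |M p.1 p.2| * (∑ j', |M p.1 j'|) :=
            Finset.sum_congr rfl (fun p _ => key3 p)
        _ = ∑ i, y i * (∑ j, |M i j|) * (∑ j, |M i j|) := by
            rw [Fintype.sum_prod_type]
            refine Finset.sum_congr rfl (fun i _ => ?_)
            dsimp only
            rw [← Finset.sum_mul, ← Finset.mul_sum]
        _ ≤ ∑ i, y i * N * N := by
            refine Finset.sum_le_sum (fun i _ => ?_)
            rw [mul_assoc, mul_assoc]
            exact mul_le_mul_of_nonneg_left
              (mul_le_mul (hSN i) (hSN i) (hS i).le ((hS i).le.trans (hSN i))) (hynn i)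
        _ = N ^ 2 := by
            rw [← Finset.sum_mul, ← Finset.sum_mul, hysum]; ring
    have sumY : ∑ j, pb j * (b j / pb j) ^ 2 = (∑ j, |b j|) ^ 2 := by
      calc ∑ j, pb j * (b j / pb j) ^ 2 = ∑ j, |b j| * (∑ j', |b j'|) :=
            Finset.sum_congr rfl (fun j _ => key4 j)
        _ = (∑ j, |b j|) ^ 2 := by rw [← Finset.sum_mul]; ring
    calc ∑ ω : (Fin m × Fin n) × Fin n, (pM ω.1 * pb ω.2) * (∑ k, (g ω k) ^ 2)
        ≤ ∑ ω : (Fin m × Fin n) × Fin n,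
            (2 * (pb ω.2 * (pM ω.1 * (M ω.1.1 ω.1.2 * y ω.1.1 / pM ω.1) ^ 2))
              + 2 * (pM ω.1 * (pb ω.2 * (b ω.2 / pb ω.2) ^ 2))) :=
          Finset.sum_le_sum (fun ω _ => pointwise ω)
      _ = 2 * (∑ p : Fin m × Fin n, pM p * (M p.1 p.2 * y p.1 / pM p) ^ 2)
            + 2 * (∑ j, pb j * (b j / pb j) ^ 2) := by
          rw [Finset.sum_add_distrib]
          congr 1
          · rw [Fintype.sum_prod_type]
            have inner : ∀ p : Fin m × Fin n,
                ∑ j' : Fin n, 2 * (pb j' * (pM p * (M p.1 p.2 * y p.1 / pM p) ^ 2))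
                = 2 * (pM p * (M p.1 p.2 * y p.1 / pM p) ^ 2) := by
              intro p
              rw [← Finset.mul_sum, ← Finset.sum_mul, hpbsum, one_mul]
            rw [Finset.sum_congr rfl (fun p _ => inner p), ← Finset.mul_sum]
          · rw [Fintype.sum_prod_type]
            have inner : ∀ p : Fin m × Fin n,
                ∑ j' : Fin n, 2 * (pM p * (pb j' * (b j' / pb j') ^ 2))
                = pM p * (2 * ∑ j, pb j * (b j / pb j) ^ 2) := by
              intro p
              rw [Finset.mul_sum, Finset.mul_sum]
              exact Finset.sum_congr rfl (fun j _ => by ring)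
            rw [Finset.sum_congr rfl (fun p _ => inner p), ← Finset.sum_mul, hpMsum, one_mul]
      _ ≤ 2 * ((∑ j, |b j|) ^ 2 + N ^ 2) := by
          rw [sumY]; linarith
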